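/- Let S_{V,1} be the linear span of S_V and φ₁ in ℂ² ⊗ ℂ² ⊗ ℂ². Then the set of one-dimensional subspaces of S_{V,1} spanned by product vectors has exactly 6 elements, namely those spanned by: φ₁ = |0⟩ ⊗ |1⟩ ⊗ |+⟩; |−⟩ ⊗ |+⟩ ⊗ |1⟩; |−⟩ ⊗ |−⟩ ⊗ |+⟩; |0⟩ ⊗ |+⟩ ⊗ |0⟩; |+⟩ ⊗ |1⟩ ⊗ |1⟩; and |+⟩ ⊗ |−⟩ ⊗ |0⟩. In particular, every product vector in S_{V,1} is a scalar multiple of one of these six vectors. -/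

import Mathlib

noncomputable section

abbrev Q : Type := EuclideanSpace ℂ (Fin 2)
abbrev Q2 : Type := EuclideanSpace ℂ (Fin 2 × Fin 2)
abbrev Q3 : Type := EuclideanSpace ℂ (Fin 2 × Fin 2 × Fin 2)

/-- standard basis vector of ℂ² -/
def ket2 (i : Fin 2) : Q := EuclideanSpace.single i 1

/-- the state |+⟩ -/
def plus : Q := (Real.sqrt 2 : ℂ)⁻¹ • (ket2 0 + ket2 1)

/-- the state |−⟩ -/
def minus : Q := (Real.sqrt 2 : ℂ)⁻¹ • (ket2 0 - ket2 1)

/-- elementary tensor of three qubit vectors, in ℂ² ⊗ ℂ² ⊗ ℂ² ≅ ℂ⁸ -/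
def tp3 (u v w : Q) : Q3 := WithLp.toLp 2 (fun p => u p.1 * v p.2.1 * w p.2.2)

/-- a product vector in ℂ² ⊗ ℂ² ⊗ ℂ² -/
def IsProd3 (ξ : Q3) : Prop := ∃ u v w : Q, ξ = tp3 u v w

/-- the set of one-dimensional subspaces of `T` spanned by (nonzero) product vectors -/
def prodLines3 (T : Submodule ℂ Q3) : Set (Submodule ℂ Q3) :=
  {L | ∃ ξ : Q3, ξ ≠ 0 ∧ ξ ∈ T ∧ IsProd3 ξ ∧ L = Submodule.span ℂ {ξ}}

/-- a factorized vector across the bipartite cut {1} | {2,3} -/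
def cut1 (u : Q) (η : Q2) : Q3 := WithLp.toLp 2 (fun p => u p.1 * η p.2)

/-- a factorized vector across the bipartite cut {2} | {1,3} -/
def cut2 (u : Q) (η : Q2) : Q3 := WithLp.toLp 2 (fun p => u p.2.1 * η (p.1, p.2.2))

/-- a factorized vector across the bipartite cut {3} | {1,2} -/
def cut3 (u : Q) (η : Q2) : Q3 := WithLp.toLp 2 (fun p => u p.2.2 * η (p.1, p.2.1))

def φ₁ : Q3 := tp3 (ket2 0) (ket2 1) plus
def φ₂ : Q3 := tp3 (ket2 1) plus (ket2 0)
def φ₃ : Q3 := tp3 plus (ket2 0) (ket2 1)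
def φ₄ : Q3 := tp3 minus minus minus

/-- the span of the three-qubit UPB of Bennett et al. -/
def V3 : Submodule ℂ Q3 := Submodule.span ℂ {φ₁, φ₂, φ₃, φ₄}

/-- the orthogonal complement of the span of the three-qubit UPB -/
def SV : Submodule ℂ Q3 := V3ᗮ

/-- the perturbation of `S_V` by `φ₁` -/
def SV1 : Submodule ℂ Q3 := SV ⊔ Submodule.span ℂ {φ₁}

local notation "s" => ((Real.sqrt 2 : ℝ) : ℂ)

lemma hs0 : s ≠ 0 := by
  simp only [ne_eq, Complex.ofReal_eq_zero]
  positivity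

lemma hs2 : s^2 = 2 := by
  rw [← Complex.ofReal_pow, Real.sq_sqrt (by norm_num)]
  norm_num

@[simp] lemma ket2_apply (i j : Fin 2) : ket2 i j = if j = i then 1 else 0 :=
  EuclideanSpace.single_apply i 1 j

@[simp] lemma plus_apply (j : Fin 2) : plus j = s⁻¹ := by
  fin_cases j <;> simp [plus]

@[simp] lemma minus_apply_zero : minus 0 = s⁻¹ := by simp [minus]
@[simp] lemma minus_apply_one : minus 1 = -s⁻¹ := by simp [minus]

lemma tp3_apply (u v w : Q) (p : Fin 2 × Fin 2 × Fin 2) :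
    tp3 u v w p = u p.1 * v p.2.1 * w p.2.2 := rfl

open ComplexConjugate in
lemma inner3 (ξ η : Q3) : (inner ℂ ξ η : ℂ) =
    conj (ξ (0,0,0)) * η (0,0,0) + conj (ξ (0,0,1)) * η (0,0,1) +
    conj (ξ (0,1,0)) * η (0,1,0) + conj (ξ (0,1,1)) * η (0,1,1) +
    conj (ξ (1,0,0)) * η (1,0,0) + conj (ξ (1,0,1)) * η (1,0,1) +
    conj (ξ (1,1,0)) * η (1,1,0) + conj (ξ (1,1,1)) * η (1,1,1) := by
  rw [PiLp.inner_apply]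
  simp_rw [Fintype.sum_prod_type, Fin.sum_univ_two, RCLike.inner_apply]
  ring

def F1 (ξ : Q3) : ℂ := ξ (0,1,0) + ξ (0,1,1)
def F2 (ξ : Q3) : ℂ := ξ (1,0,0) + ξ (1,1,0)
def F3 (ξ : Q3) : ℂ := ξ (0,0,1) + ξ (1,0,1)
def F4 (ξ : Q3) : ℂ :=
  ξ (0,0,0) - ξ (0,0,1) - ξ (0,1,0) + ξ (0,1,1)
  - ξ (1,0,0) + ξ (1,0,1) + ξ (1,1,0) - ξ (1,1,1)

lemma inner_phi1 (ξ : Q3) : (inner ℂ φ₁ ξ : ℂ) = s⁻¹ * F1 ξ := by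
  rw [inner3]; simp [φ₁, tp3_apply, F1]; ring
lemma inner_phi2 (ξ : Q3) : (inner ℂ φ₂ ξ : ℂ) = s⁻¹ * F2 ξ := by
  rw [inner3]; simp [φ₂, tp3_apply, F2]; ring
lemma inner_phi3 (ξ : Q3) : (inner ℂ φ₃ ξ : ℂ) = s⁻¹ * F3 ξ := by
  rw [inner3]; simp [φ₃, tp3_apply, F3]; ring
lemma inner_phi4 (ξ : Q3) : (inner ℂ φ₄ ξ : ℂ) = s⁻¹ * s⁻¹ * s⁻¹ * F4 ξ := by
  rw [inner3]; simp [φ₄, tp3_apply, F4]; ring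

lemma F1_phi1 : F1 φ₁ = s⁻¹ + s⁻¹ := by simp [F1, φ₁, tp3_apply]
lemma F2_phi1 : F2 φ₁ = 0 := by simp [F2, φ₁, tp3_apply]
lemma F3_phi1 : F3 φ₁ = 0 := by simp [F3, φ₁, tp3_apply]
lemma F4_phi1 : F4 φ₁ = 0 := by simp [F4, φ₁, tp3_apply]

lemma Fsub (ξ η : Q3) : F1 (ξ - η) = F1 ξ - F1 η ∧ F2 (ξ - η) = F2 ξ - F2 η ∧
    F3 (ξ - η) = F3 ξ - F3 η ∧ F4 (ξ - η) = F4 ξ - F4 η := by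
  refine ⟨?_, ?_, ?_, ?_⟩ <;> simp [F1, F2, F3, F4] <;> ring

lemma Fsmul (c : ℂ) (η : Q3) : F1 (c • η) = c * F1 η ∧ F2 (c • η) = c * F2 η ∧
    F3 (c • η) = c * F3 η ∧ F4 (c • η) = c * F4 η := by
  refine ⟨?_, ?_, ?_, ?_⟩ <;> simp [F1, F2, F3, F4] <;> ring

lemma mem_SV1_iff (ξ : Q3) : ξ ∈ SV1 ↔ F2 ξ = 0 ∧ F3 ξ = 0 ∧ F4 ξ = 0 := by
  constructor
  · intro h
    obtain ⟨a, ha, b, hb, rfl⟩ := Submodule.mem_sup.mp h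
    obtain ⟨c, rfl⟩ := Submodule.mem_span_singleton.mp hb
    have horth : ∀ ψ, ψ ∈ ({φ₁, φ₂, φ₃, φ₄} : Set Q3) → (inner ℂ ψ a : ℂ) = 0 := by
      intro ψ hψ
      exact (Submodule.mem_orthogonal V3 a).mp ha ψ (Submodule.subset_span hψ)
    have h2 : F2 a = 0 := by
      have := horth φ₂ (by simp)
      rw [inner_phi2] at this
      exact (mul_eq_zero.mp this).resolve_left (inv_ne_zero hs0)
    have h3 : F3 a = 0 := by
      have := horth φ₃ (by simp)
      rw [inner_phi3] at this
      exact (mul_eq_zero.mp this).resolve_left (inv_ne_zero hs0)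
    have h4 : F4 a = 0 := by
      have := horth φ₄ (by simp)
      rw [inner_phi4] at this
      rcases mul_eq_zero.mp this with h | h
      · exact absurd h (by simp [hs0])
      · exact h
    have e2 : F2 (a + c • φ₁) = F2 a + c * F2 φ₁ := by simp [F2]; ring
    have e3 : F3 (a + c • φ₁) = F3 a + c * F3 φ₁ := by simp [F3]; ring
    have e4 : F4 (a + c • φ₁) = F4 a + c * F4 φ₁ := by simp [F4]; ring
    rw [e2, e3, e4, h2, h3, h4, F2_phi1, F3_phi1, F4_phi1]
    simp
  · rintro ⟨h2, h3, h4⟩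
    set c : ℂ := s⁻¹ * F1 ξ with hc
    have hη : ξ - c • φ₁ ∈ SV := by
      rw [SV, Submodule.mem_orthogonal]
      intro u hu
      induction hu using Submodule.span_induction with
      | mem x hx =>
        rcases hx with rfl | rfl | rfl | rfl
        · rw [inner_phi1]
          have : F1 (ξ - c • φ₁) = F1 ξ - c * F1 φ₁ := by simp [F1]; ring
          rw [this, F1_phi1, hc]
          have : (s:ℂ) ≠ 0 := hs0
          field_simp
          linear_combination F1 ξ * hs2
        · rw [inner_phi2]
          have : F2 (ξ - c • φ₁) = F2 ξ - c * F2 φ₁ := by simp [F2]; ring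
          rw [this, F2_phi1, h2]; ring
        · rw [inner_phi3]
          have : F3 (ξ - c • φ₁) = F3 ξ - c * F3 φ₁ := by simp [F3]; ring
          rw [this, F3_phi1, h3]; ring
        · rw [inner_phi4]
          have : F4 (ξ - c • φ₁) = F4 ξ - c * F4 φ₁ := by simp [F4]; ring
          rw [this, F4_phi1, h4]; ring
      | zero => exact inner_zero_left _
      | add x y _ _ hx hy => rw [inner_add_left, hx, hy]; ring
      | smul a x _ hx => rw [inner_smul_left, hx]; ring
    have : ξ = (ξ - c • φ₁) + c • φ₁ := by abel
    rw [this]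
    exact Submodule.add_mem _ (Submodule.mem_sup_left hη)
      (Submodule.mem_sup_right (Submodule.mem_span_singleton.mpr ⟨c, rfl⟩))

lemma F2_tp3 (u v w : Q) : F2 (tp3 u v w) = u 1 * (v 0 + v 1) * w 0 := by
  simp [F2, tp3_apply]; ring
lemma F3_tp3 (u v w : Q) : F3 (tp3 u v w) = (u 0 + u 1) * v 0 * w 1 := by
  simp [F3, tp3_apply]; ring
lemma F4_tp3 (u v w : Q) : F4 (tp3 u v w) = (u 0 - u 1) * (v 0 - v 1) * (w 0 - w 1) := by
  simp [F4, tp3_apply]; ring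

lemma comps {u v w : Q} (hx : tp3 u v w ≠ 0) :
    (u 0 ≠ 0 ∨ u 1 ≠ 0) ∧ (v 0 ≠ 0 ∨ v 1 ≠ 0) ∧ (w 0 ≠ 0 ∨ w 1 ≠ 0) := by
  have : ∃ p, tp3 u v w p ≠ 0 := by
    by_contra h
    push_neg at h
    exact hx (by ext p; simpa using h p)
  obtain ⟨⟨x, y, z⟩, hp⟩ := this
  rw [tp3_apply] at hp
  have hu : u x ≠ 0 := fun h => hp (by simp [h])
  have hv : v y ≠ 0 := fun h => hp (by simp [h])
  have hw : w z ≠ 0 := fun h => hp (by simp [h])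
  exact ⟨by fin_cases x; exacts [Or.inl hu, Or.inr hu],
         by fin_cases y; exacts [Or.inl hv, Or.inr hv],
         by fin_cases z; exacts [Or.inl hw, Or.inr hw]⟩

lemma span_singleton_eq_of_smul {x y : Q3} (c : ℂ) (hx : x ≠ 0) (h : x = c • y) :
    Submodule.span ℂ {x} = Submodule.span ℂ {y} := by
  have hc : c ≠ 0 := fun h0 => hx (by simp [h, h0])
  rw [h]
  exact Submodule.span_singleton_smul_eq (IsUnit.mk0 c hc) y

lemma case_k1 {u v w : Q} (hx : tp3 u v w ≠ 0) (h1 : u 1 = 0) (h2 : v 0 = 0)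
    (h3 : w 0 - w 1 = 0) : Submodule.span ℂ {tp3 u v w} = Submodule.span ℂ {φ₁} := by
  have hw : w 1 = w 0 := by linear_combination -h3
  apply span_singleton_eq_of_smul (s * (u 0 * v 1 * w 0)) hx
  have h0 : s ≠ 0 := hs0
  ext p; obtain ⟨x, y, z⟩ := p
  fin_cases x <;> fin_cases y <;> fin_cases z <;>
    simp [tp3_apply, φ₁, h1, h2, hw] <;> field_simp <;> ring

lemma case_k2 {u v w : Q} (hx : tp3 u v w ≠ 0) (h1 : w 0 = 0) (h2 : u 0 + u 1 = 0)
    (h3 : v 0 - v 1 = 0) :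
    Submodule.span ℂ {tp3 u v w} = Submodule.span ℂ {tp3 minus plus (ket2 1)} := by
  have hu : u 1 = -u 0 := by linear_combination h2
  have hv : v 1 = v 0 := by linear_combination -h3
  apply span_singleton_eq_of_smul (s^2 * (u 0 * v 0 * w 1)) hx
  have h0 : s ≠ 0 := hs0
  ext p; obtain ⟨x, y, z⟩ := p
  fin_cases x <;> fin_cases y <;> fin_cases z <;>
    simp [tp3_apply, h1, hu, hv] <;> field_simp <;> ring

lemma case_k3 {u v w : Q} (hx : tp3 u v w ≠ 0) (h1 : v 0 + v 1 = 0) (h2 : u 0 + u 1 = 0)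
    (h3 : w 0 - w 1 = 0) :
    Submodule.span ℂ {tp3 u v w} = Submodule.span ℂ {tp3 minus minus plus} := by
  have hu : u 1 = -u 0 := by linear_combination h2
  have hv : v 1 = -v 0 := by linear_combination h1
  have hw : w 1 = w 0 := by linear_combination -h3
  apply span_singleton_eq_of_smul (s^3 * (u 0 * v 0 * w 0)) hx
  have h0 : s ≠ 0 := hs0
  ext p; obtain ⟨x, y, z⟩ := p
  fin_cases x <;> fin_cases y <;> fin_cases z <;>
    simp [tp3_apply, hu, hv, hw] <;> field_simp <;> ring

lemma case_k4 {u v w : Q} (hx : tp3 u v w ≠ 0) (h1 : u 1 = 0) (h2 : w 1 = 0)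
    (h3 : v 0 - v 1 = 0) :
    Submodule.span ℂ {tp3 u v w} = Submodule.span ℂ {tp3 (ket2 0) plus (ket2 0)} := by
  have hv : v 1 = v 0 := by linear_combination -h3
  apply span_singleton_eq_of_smul (s * (u 0 * v 0 * w 0)) hx
  have h0 : s ≠ 0 := hs0
  ext p; obtain ⟨x, y, z⟩ := p
  fin_cases x <;> fin_cases y <;> fin_cases z <;>
    simp [tp3_apply, h1, h2, hv] <;> field_simp <;> ring

lemma case_k5 {u v w : Q} (hx : tp3 u v w ≠ 0) (h1 : w 0 = 0) (h2 : v 0 = 0)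
    (h3 : u 0 - u 1 = 0) :
    Submodule.span ℂ {tp3 u v w} = Submodule.span ℂ {tp3 plus (ket2 1) (ket2 1)} := by
  have hu : u 1 = u 0 := by linear_combination -h3
  apply span_singleton_eq_of_smul (s * (u 0 * v 1 * w 1)) hx
  have h0 : s ≠ 0 := hs0
  ext p; obtain ⟨x, y, z⟩ := p
  fin_cases x <;> fin_cases y <;> fin_cases z <;>
    simp [tp3_apply, h1, h2, hu] <;> field_simp <;> ring

lemma case_k6 {u v w : Q} (hx : tp3 u v w ≠ 0) (h1 : v 0 + v 1 = 0) (h2 : w 1 = 0)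
    (h3 : u 0 - u 1 = 0) :
    Submodule.span ℂ {tp3 u v w} = Submodule.span ℂ {tp3 plus minus (ket2 0)} := by
  have hu : u 1 = u 0 := by linear_combination -h3
  have hv : v 1 = -v 0 := by linear_combination h1
  apply span_singleton_eq_of_smul (s^2 * (u 0 * v 0 * w 0)) hx
  have h0 : s ≠ 0 := hs0
  ext p; obtain ⟨x, y, z⟩ := p
  fin_cases x <;> fin_cases y <;> fin_cases z <;>
    simp [tp3_apply, h2, hu, hv] <;> field_simp <;> ring

lemma bad2 {t : Q} (h : t 0 ≠ 0 ∨ t 1 ≠ 0) (h0 : t 0 = 0) (h1 : t 1 = 0) : False := by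
  rcases h with h|h
  exacts [h h0, h h1]

lemma badu12 {t : Q} (h : t 0 ≠ 0 ∨ t 1 ≠ 0) (p : t 1 = 0) (q : t 0 + t 1 = 0) : False :=
  bad2 h (by linear_combination q - p) p
lemma badu13 {t : Q} (h : t 0 ≠ 0 ∨ t 1 ≠ 0) (p : t 1 = 0) (q : t 0 - t 1 = 0) : False :=
  bad2 h (by linear_combination q + p) p
lemma badu23 {t : Q} (h : t 0 ≠ 0 ∨ t 1 ≠ 0) (p : t 0 + t 1 = 0) (q : t 0 - t 1 = 0) : False :=
  bad2 h (by linear_combination (p + q) / 2) (by linear_combination (p - q) / 2)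
lemma badv12 {t : Q} (h : t 0 ≠ 0 ∨ t 1 ≠ 0) (p : t 0 + t 1 = 0) (q : t 0 = 0) : False :=
  bad2 h q (by linear_combination p - q)
lemma badv23 {t : Q} (h : t 0 ≠ 0 ∨ t 1 ≠ 0) (p : t 0 = 0) (q : t 0 - t 1 = 0) : False :=
  bad2 h p (by linear_combination p - q)
lemma badw12 {t : Q} (h : t 0 ≠ 0 ∨ t 1 ≠ 0) (p : t 0 = 0) (q : t 1 = 0) : False :=
  bad2 h p q
lemma badw13 {t : Q} (h : t 0 ≠ 0 ∨ t 1 ≠ 0) (p : t 0 = 0) (q : t 0 - t 1 = 0) : False :=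
  bad2 h p (by linear_combination p - q)
lemma badw23 {t : Q} (h : t 0 ≠ 0 ∨ t 1 ≠ 0) (p : t 1 = 0) (q : t 0 - t 1 = 0) : False :=
  bad2 h (by linear_combination q + p) p

lemma ne_zero_of_apply {x : Q3} (p : Fin 2 × Fin 2 × Fin 2) (h : x p ≠ 0) : x ≠ 0 :=
  fun h0 => h (by rw [h0]; rfl)

lemma span_ne {x y : Q3} (p : Fin 2 × Fin 2 × Fin 2) (hx : x p ≠ 0) (hy : y p = 0) :
    Submodule.span ℂ {x} ≠ Submodule.span ℂ {y} := by
  intro h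
  have : x ∈ Submodule.span ℂ {y} := h ▸ Submodule.mem_span_singleton_self x
  obtain ⟨c, hc⟩ := Submodule.mem_span_singleton.mp this
  apply hx
  rw [← hc]
  show c * y p = 0
  rw [hy, mul_zero]

lemma mem1 : φ₁ ∈ SV1 := (mem_SV1_iff _).mpr
  ⟨by rw [φ₁, F2_tp3]; simp, by rw [φ₁, F3_tp3]; simp, by rw [φ₁, F4_tp3]; simp⟩
lemma mem2 : tp3 minus plus (ket2 1) ∈ SV1 := (mem_SV1_iff _).mpr
  ⟨by rw [F2_tp3]; simp, by rw [F3_tp3]; simp, by rw [F4_tp3]; simp⟩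
lemma mem3 : tp3 minus minus plus ∈ SV1 := (mem_SV1_iff _).mpr
  ⟨by rw [F2_tp3]; simp, by rw [F3_tp3]; simp, by rw [F4_tp3]; simp⟩
lemma mem4 : tp3 (ket2 0) plus (ket2 0) ∈ SV1 := (mem_SV1_iff _).mpr
  ⟨by rw [F2_tp3]; simp, by rw [F3_tp3]; simp, by rw [F4_tp3]; simp⟩
lemma mem5 : tp3 plus (ket2 1) (ket2 1) ∈ SV1 := (mem_SV1_iff _).mpr
  ⟨by rw [F2_tp3]; simp, by rw [F3_tp3]; simp, by rw [F4_tp3]; simp⟩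
lemma mem6 : tp3 plus minus (ket2 0) ∈ SV1 := (mem_SV1_iff _).mpr
  ⟨by rw [F2_tp3]; simp, by rw [F3_tp3]; simp, by rw [F4_tp3]; simp⟩

lemma nz1 : φ₁ ≠ 0 := ne_zero_of_apply (0,1,0) (by simp [φ₁, tp3_apply, hs0])
lemma nz2 : tp3 minus plus (ket2 1) ≠ 0 := ne_zero_of_apply (0,0,1) (by simp [tp3_apply, hs0])
lemma nz3 : tp3 minus minus plus ≠ 0 := ne_zero_of_apply (0,0,0) (by simp [tp3_apply, hs0])
lemma nz4 : tp3 (ket2 0) plus (ket2 0) ≠ 0 := ne_zero_of_apply (0,0,0) (by simp [tp3_apply, hs0])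
lemma nz5 : tp3 plus (ket2 1) (ket2 1) ≠ 0 := ne_zero_of_apply (0,1,1) (by simp [tp3_apply, hs0])
lemma nz6 : tp3 plus minus (ket2 0) ≠ 0 := ne_zero_of_apply (0,0,0) (by simp [tp3_apply, hs0])

theorem statement9 :
    prodLines3 SV1 =
      {Submodule.span ℂ {φ₁},
       Submodule.span ℂ {tp3 minus plus (ket2 1)},
       Submodule.span ℂ {tp3 minus minus plus},
       Submodule.span ℂ {tp3 (ket2 0) plus (ket2 0)},
       Submodule.span ℂ {tp3 plus (ket2 1) (ket2 1)},
       Submodule.span ℂ {tp3 plus minus (ket2 0)}} ∧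
    (prodLines3 SV1).ncard = 6 := by
  have hset : prodLines3 SV1 =
      {Submodule.span ℂ {φ₁},
       Submodule.span ℂ {tp3 minus plus (ket2 1)},
       Submodule.span ℂ {tp3 minus minus plus},
       Submodule.span ℂ {tp3 (ket2 0) plus (ket2 0)},
       Submodule.span ℂ {tp3 plus (ket2 1) (ket2 1)},
       Submodule.span ℂ {tp3 plus minus (ket2 0)}} := by
    ext L
    simp only [prodLines3, Set.mem_setOf_eq, Set.mem_insert_iff, Set.mem_singleton_iff]
    constructor
    · rintro ⟨ξ, hξ0, hξT, ⟨u, v, w, rfl⟩, rfl⟩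
      obtain ⟨hF2, hF3, hF4⟩ := (mem_SV1_iff _).mp hξT
      rw [F2_tp3] at hF2
      rw [F3_tp3] at hF3
      rw [F4_tp3] at hF4
      obtain ⟨hu, hv, hw⟩ := comps hξ0
      have A : u 1 = 0 ∨ v 0 + v 1 = 0 ∨ w 0 = 0 := by
        rcases mul_eq_zero.mp hF2 with h | h
        · rcases mul_eq_zero.mp h with h' | h'
          · exact Or.inl h'
          · exact Or.inr (Or.inl h')
        · exact Or.inr (Or.inr h)
      have B : u 0 + u 1 = 0 ∨ v 0 = 0 ∨ w 1 = 0 := by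
        rcases mul_eq_zero.mp hF3 with h | h
        · rcases mul_eq_zero.mp h with h' | h'
          · exact Or.inl h'
          · exact Or.inr (Or.inl h')
        · exact Or.inr (Or.inr h)
      have C : u 0 - u 1 = 0 ∨ v 0 - v 1 = 0 ∨ w 0 - w 1 = 0 := by
        rcases mul_eq_zero.mp hF4 with h | h
        · rcases mul_eq_zero.mp h with h' | h'
          · exact Or.inl h'
          · exact Or.inr (Or.inl h')
        · exact Or.inr (Or.inr h)
      rcases A with a | a | a <;> rcases B with b | b | b <;> rcases C with c | c | c <;>
        first
        | exact Or.inl (case_k1 hξ0 a b c)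
        | exact Or.inr (Or.inl (case_k2 hξ0 a b c))
        | exact Or.inr (Or.inr (Or.inl (case_k3 hξ0 a b c)))
        | exact Or.inr (Or.inr (Or.inr (Or.inl (case_k4 hξ0 a b c))))
        | exact Or.inr (Or.inr (Or.inr (Or.inr (Or.inl (case_k5 hξ0 a b c)))))
        | exact Or.inr (Or.inr (Or.inr (Or.inr (Or.inr (case_k6 hξ0 a b c)))))
        | exact (badu12 hu a b).elim
        | exact (badu13 hu a c).elim
        | exact (badu23 hu b c).elim
        | exact (badv12 hv a b).elim
        | exact (badv23 hv b c).elim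
        | exact (badu13 hv a c).elim
        | exact (badw12 hw a b).elim
        | exact (badw13 hw a c).elim
        | exact (badw23 hw b c).elim
        | exact (badu23 hv a c).elim
    · rintro (rfl | rfl | rfl | rfl | rfl | rfl)
      · exact ⟨φ₁, nz1, mem1, ⟨_, _, _, rfl⟩, rfl⟩
      · exact ⟨_, nz2, mem2, ⟨_, _, _, rfl⟩, rfl⟩
      · exact ⟨_, nz3, mem3, ⟨_, _, _, rfl⟩, rfl⟩
      · exact ⟨_, nz4, mem4, ⟨_, _, _, rfl⟩, rfl⟩
      · exact ⟨_, nz5, mem5, ⟨_, _, _, rfl⟩, rfl⟩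
      · exact ⟨_, nz6, mem6, ⟨_, _, _, rfl⟩, rfl⟩
  refine ⟨hset, ?_⟩
  rw [hset]
  have d12 := span_ne (x := φ₁) (y := tp3 minus plus (ket2 1)) (0,1,0)
    (by simp [φ₁, tp3_apply, hs0]) (by simp [tp3_apply])
  have d13 := (span_ne (x := tp3 minus minus plus) (y := φ₁) (0,0,0)
    (by simp [tp3_apply, hs0]) (by simp [φ₁, tp3_apply])).symm
  have d14 := span_ne (x := φ₁) (y := tp3 (ket2 0) plus (ket2 0)) (0,1,1)
    (by simp [φ₁, tp3_apply, hs0]) (by simp [tp3_apply])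
  have d15 := span_ne (x := φ₁) (y := tp3 plus (ket2 1) (ket2 1)) (0,1,0)
    (by simp [φ₁, tp3_apply, hs0]) (by simp [tp3_apply])
  have d16 := span_ne (x := φ₁) (y := tp3 plus minus (ket2 0)) (0,1,1)
    (by simp [φ₁, tp3_apply, hs0]) (by simp [tp3_apply])
  have d23 := (span_ne (x := tp3 minus minus plus) (y := tp3 minus plus (ket2 1)) (0,0,0)
    (by simp [tp3_apply, hs0]) (by simp [tp3_apply])).symm
  have d24 := span_ne (x := tp3 minus plus (ket2 1)) (y := tp3 (ket2 0) plus (ket2 0)) (0,0,1)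
    (by simp [tp3_apply, hs0]) (by simp [tp3_apply])
  have d25 := span_ne (x := tp3 minus plus (ket2 1)) (y := tp3 plus (ket2 1) (ket2 1)) (0,0,1)
    (by simp [tp3_apply, hs0]) (by simp [tp3_apply])
  have d26 := span_ne (x := tp3 minus plus (ket2 1)) (y := tp3 plus minus (ket2 0)) (0,0,1)
    (by simp [tp3_apply, hs0]) (by simp [tp3_apply])
  have d34 := span_ne (x := tp3 minus minus plus) (y := tp3 (ket2 0) plus (ket2 0)) (0,0,1)
    (by simp [tp3_apply, hs0]) (by simp [tp3_apply])
  have d35 := span_ne (x := tp3 minus minus plus) (y := tp3 plus (ket2 1) (ket2 1)) (0,0,0)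
    (by simp [tp3_apply, hs0]) (by simp [tp3_apply])
  have d36 := span_ne (x := tp3 minus minus plus) (y := tp3 plus minus (ket2 0)) (0,0,1)
    (by simp [tp3_apply, hs0]) (by simp [tp3_apply])
  have d45 := span_ne (x := tp3 (ket2 0) plus (ket2 0)) (y := tp3 plus (ket2 1) (ket2 1)) (0,0,0)
    (by simp [tp3_apply, hs0]) (by simp [tp3_apply])
  have d46 := (span_ne (x := tp3 plus minus (ket2 0)) (y := tp3 (ket2 0) plus (ket2 0)) (1,0,0)
    (by simp [tp3_apply, hs0]) (by simp [tp3_apply])).symm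
  have d56 := span_ne (x := tp3 plus (ket2 1) (ket2 1)) (y := tp3 plus minus (ket2 0)) (0,1,1)
    (by simp [tp3_apply, hs0]) (by simp [tp3_apply])
  rw [Set.ncard_insert_of_notMem (by simp [d12, d13, d14, d15, d16]) (Set.toFinite _),
      Set.ncard_insert_of_notMem (by simp [d23, d24, d25, d26]) (Set.toFinite _),
      Set.ncard_insert_of_notMem (by simp [d34, d35, d36]) (Set.toFinite _),
      Set.ncard_insert_of_notMem (by simp [d45, d46]) (Set.toFinite _),
      Set.ncard_insert_of_notMem (by simp [d56]) (Set.toFinite _),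
      Set.ncard_singleton]
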